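/- Let g, j ≥ 1 be integers with k = 2j−1 and n = 2g. Suppose e_1 ≥ e_2 ≥ ... ≥ e_k ≥ 0 are integers with Σ e_i = binom(n,2) and e_1 ≥ g^2. Let a_i = e_i for i ≥ 2 and a_1 = e_1 − g^2 reordered so that a_1 ≥ ... ≥ a_{2j−1}. Then a_2 + a_4 + ... + a_{2j−2} ≤ binom(g,2) and a_3 + a_5 + ... + a_{2j−1} ≤ binom(g,2). -/

import Mathlib

lemma split_pairs (a : ℕ → ℤ) : ∀ m : ℕ,
    ∑ i ∈ Finset.Icc 1 (2*m+1), a i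
      = a 1 + ∑ i ∈ Finset.Icc 1 m, (a (2*i) + a (2*i+1)) := by
  intro m
  induction m with
  | zero => simp
  | succ m ih =>
      have h1 : 2*(m+1)+1 = (2*m+2)+1 := by ring
      rw [h1, Finset.sum_Icc_succ_top (by omega)]
      have h2 : 2*m+2 = (2*m+1)+1 := by ring
      rw [h2, Finset.sum_Icc_succ_top (by omega), ih,
        Finset.sum_Icc_succ_top (by omega : 1 ≤ m+1),
        show a (2*(m+1)) = a (2*m+1+1) from congrArg a (by omega),
        show a (2*(m+1)+1) = a (2*m+1+1+1) from congrArg a (by omega)]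
      ring

lemma even_le (a : ℕ → ℤ) : ∀ m : ℕ,
    (∀ i, 1 ≤ i → i ≤ 2*m → a (i+1) ≤ a i) →
    a (2*m+1) + ∑ i ∈ Finset.Icc 1 m, a (2*i)
      ≤ a 1 + ∑ i ∈ Finset.Icc 1 m, a (2*i+1) := by
  intro m
  induction m with
  | zero => simp
  | succ m ih =>
      intro hm
      have ihh := ih (fun i h1 h2 => hm i h1 (by omega))
      rw [Finset.sum_Icc_succ_top (by omega : 1 ≤ m+1),
        Finset.sum_Icc_succ_top (by omega : 1 ≤ m+1)]
      have h1 : a (2*m+1+1) ≤ a (2*m+1) := hm (2*m+1) (by omega) (by omega)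
      rw [show a (2*(m+1)) = a (2*m+1+1) from congrArg a (by omega),
        show a (2*(m+1)+1) = a (2*m+1+1+1) from congrArg a (by omega)]
      linarith

lemma two_mul_choose_two (x : ℕ) : 2 * Nat.choose x 2 = x * (x - 1) := by
  induction x with
  | zero => simp
  | succ n ih =>
      rw [Nat.choose_succ_succ, Nat.choose_one_right, Nat.mul_add, ih]
      cases n with
      | zero => simp
      | succ t => simp [Nat.succ_sub_one]; ring

theorem stmt_17 (g j k n : ℕ) (hg : 1 ≤ g) (hj : 1 ≤ j)
    (hk : k = 2 * j - 1) (hn : n = 2 * g)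
    (e a : ℕ → ℤ)
    (hmono : ∀ i, 1 ≤ i → i < k → e (i + 1) ≤ e i)
    (hnonneg : ∀ i, 1 ≤ i → i ≤ k → 0 ≤ e i)
    (hsum : ∑ i ∈ Finset.Icc 1 k, e i = (n.choose 2 : ℤ))
    (he1 : (g : ℤ) ^ 2 ≤ e 1)
    (hamono : ∀ i, 1 ≤ i → i < k → a (i + 1) ≤ a i)
    (hperm : Multiset.map a (Finset.Icc 1 k).val
      = (e 1 - (g : ℤ) ^ 2) ::ₘ Multiset.map e (Finset.Icc 2 k).val) :
    (∑ i ∈ Finset.Icc 1 (j - 1), a (2 * i)) ≤ (g.choose 2 : ℤ) ∧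
    (∑ i ∈ Finset.Icc 1 (j - 1), a (2 * i + 1)) ≤ (g.choose 2 : ℤ) := by
  obtain ⟨m, rfl⟩ : ∃ m, j = m + 1 := ⟨j - 1, by omega⟩
  have hkm : k = 2*m+1 := by omega
  subst hkm hn
  simp only [Nat.add_sub_cancel]
  -- a k ≥ 0
  have hak : 0 ≤ a (2*m+1) := by
    have hmem : a (2*m+1) ∈ Multiset.map a (Finset.Icc 1 (2*m+1)).val :=
      Multiset.mem_map_of_mem _ (by simp [Finset.mem_Icc])
    rw [hperm] at hmem
    rcases Multiset.mem_cons.mp hmem with h | h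
    · rw [h]; linarith
    · obtain ⟨i, hi, hie⟩ := Multiset.mem_map.mp h
      rw [Finset.mem_val, Finset.mem_Icc] at hi
      rw [← hie]
      exact hnonneg i (by omega) (by omega)
  -- sum of e splits
  have hins : Finset.Icc 1 (2*m+1) = insert 1 (Finset.Icc 2 (2*m+1)) := by
    ext x; simp [Finset.mem_Icc, Finset.mem_insert]; omega
  have hesplit : ∑ i ∈ Finset.Icc 1 (2*m+1), e i
      = e 1 + ∑ i ∈ Finset.Icc 2 (2*m+1), e i := by
    rw [hins, Finset.sum_insert (by simp [Finset.mem_Icc])]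
  -- total sum of a
  have hasum : ∑ i ∈ Finset.Icc 1 (2*m+1), a i
      = (Nat.choose (2*g) 2 : ℤ) - (g:ℤ)^2 := by
    rw [Finset.sum_eq_multiset_sum, hperm, Multiset.sum_cons,
      ← Finset.sum_eq_multiset_sum]
    have := hsum
    rw [hesplit] at this
    linarith
  -- choose identity
  have hch : (Nat.choose (2*g) 2 : ℤ) - (g:ℤ)^2 = 2 * (Nat.choose g 2 : ℤ) := by
    have k1 := two_mul_choose_two (2*g)
    have k2 := two_mul_choose_two g
    zify [hg, (by omega : 1 ≤ 2*g)] at k1 k2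
    have h2 : 2 * ((Nat.choose (2*g) 2 : ℤ) - (g:ℤ)^2)
        = 2 * (2 * (Nat.choose g 2 : ℤ)) := by
      linear_combination k1 - 2 * k2
    linarith
  rw [split_pairs a m, Finset.sum_add_distrib] at hasum
  have hle := even_le a m (fun i h1 h2 => hamono i h1 (by omega))
  have hoe : ∑ i ∈ Finset.Icc 1 m, a (2*i+1) ≤ ∑ i ∈ Finset.Icc 1 m, a (2*i) := by
    apply Finset.sum_le_sum
    intro i hi
    rw [Finset.mem_Icc] at hi
    exact hamono (2*i) (by omega) (by omega)
  constructor <;> linarith
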